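/- The series ∑_{n=0}^{∞} 1/(4 + n²) converges and its sum equals (1/8)·(2π·coth(2π) + 1), where coth is the real hyperbolic cotangent. -/

import Mathlib

open Real

/-- The real hyperbolic cotangent, `coth x = cosh x / sinh x`. -/
noncomputable def cothR (x : ℝ) : ℝ := Real.cosh x / Real.sinh x

section aux
open Complex


local notation "T" => 2 * Real.pi

noncomputable def Fc : C(AddCircle (2 * Real.pi), ℂ) :=
  ⟨fun θ => (Real.cosh (2 * ‖θ‖) : ℂ), by
    exact Complex.continuous_ofReal.comp (Real.continuous_cosh.comp
      (continuous_const.mul continuous_norm))⟩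

lemma Fc_coe (x : ℝ) (hx : |x| ≤ Real.pi) :
    Fc ((x : ℝ) : AddCircle (2 * Real.pi)) = Complex.cosh (2 * (x:ℂ)) := by
  have h2 : ‖((x : ℝ) : AddCircle (2 * Real.pi))‖ = |x| := by
    have hp : (0:ℝ) < 2 * Real.pi := by positivity
    refine (AddCircle.norm_coe_eq_abs_iff _ hp.ne').mpr ?_
    rw [abs_of_pos hp]
    linarith
  show (Real.cosh (2 * ‖((x : ℝ) : AddCircle (2 * Real.pi))‖) : ℂ) = _
  rw [h2, show (2:ℝ) * |x| = |2*x| by rw [abs_mul]; norm_num, Real.cosh_abs,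
    Complex.ofReal_cosh]
  norm_num

lemma neg_one_zpow_mul_self (n : ℤ) : ((-1:ℂ)^n) * ((-1:ℂ)^n) = 1 := by
  rw [← mul_zpow]; norm_num

lemma exp_int_pi_I (n : ℤ) : Complex.exp ((n:ℂ) * Real.pi * Complex.I) = (-1:ℂ)^n := by
  rw [mul_assoc, Complex.exp_int_mul, Complex.exp_pi_mul_I]

lemma exp_neg_int_pi_I (n : ℤ) : Complex.exp (-((n:ℂ) * Real.pi * Complex.I)) = (-1:ℂ)^n := by
  rw [Complex.exp_neg, exp_int_pi_I]
  exact inv_eq_of_mul_eq_one_left (neg_one_zpow_mul_self n)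

lemma two_sub_ne (n : ℤ) : (2:ℂ) - n * Complex.I ≠ 0 := by
  intro h
  have := congrArg Complex.re h
  simp at this

lemma neg_two_sub_ne (n : ℤ) : (-2:ℂ) - n * Complex.I ≠ 0 := by
  intro h
  have := congrArg Complex.re h
  simp at this

lemma four_add_sq_ne (n : ℤ) : (4:ℂ) + (n:ℂ)^2 ≠ 0 := by
  have h : (4:ℂ) + (n:ℂ)^2 = ((2:ℂ) - n * Complex.I) * (-((-2:ℂ) - n * Complex.I)) := by
    have hI := Complex.I_sq
    ring_nf
    rw [hI]
    ring
  rw [h]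
  exact mul_ne_zero (two_sub_ne n) (neg_ne_zero.mpr (neg_two_sub_ne n))

lemma fourierCoeff_Fc (n : ℤ) :
    haveI : Fact (0 < 2 * Real.pi) := ⟨by positivity⟩
    fourierCoeff (⇑Fc) n
      = (-1:ℂ)^n * (2 * Real.sinh (2*Real.pi) / Real.pi : ℝ) / (4 + (n:ℂ)^2) := by
  haveI : Fact (0 < 2 * Real.pi) := ⟨by positivity⟩
  have hπ : (Real.pi : ℂ) ≠ 0 := Complex.ofReal_ne_zero.mpr Real.pi_ne_zero
  rw [fourierCoeff_eq_intervalIntegral (⇑Fc) n (-Real.pi)]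
  have hb : -Real.pi + 2 * Real.pi = Real.pi := by ring
  rw [hb]
  have h1 : Set.EqOn (fun x : ℝ => (fourier (-n) ((x:ℝ) : AddCircle (2*Real.pi)) : ℂ) • Fc ((x:ℝ) : AddCircle (2*Real.pi)))
      (fun x : ℝ => (Complex.exp (((2:ℂ) - n * Complex.I) * x)
        + Complex.exp (((-2:ℂ) - n * Complex.I) * x)) / 2)
      (Set.uIcc (-Real.pi) Real.pi) := by
    intro x hx
    rw [Set.uIcc_of_le (by linarith [Real.pi_pos])] at hx
    have hxabs : |x| ≤ Real.pi := abs_le.mpr ⟨hx.1, hx.2⟩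
    have hfour : (fourier (-n) ((x:ℝ) : AddCircle (2*Real.pi)) : ℂ)
        = Complex.exp (-((n:ℂ) * Complex.I) * x) := by
      rw [fourier_coe_apply]
      congr 1
      push_cast
      field_simp
    simp only [smul_eq_mul, hfour, Fc_coe x hxabs]
    have hc : Complex.cosh (2 * (x:ℂ)) = (Complex.exp (2*(x:ℂ)) + Complex.exp (-(2*(x:ℂ))))/2 := by
      rw [eq_div_iff (two_ne_zero' ℂ), mul_comm _ (2:ℂ), Complex.two_cosh]
    rw [hc,show ((2:ℂ) - n * Complex.I) * x = 2 * (x:ℂ) + -((n:ℂ) * Complex.I) * x by ring,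
      show ((-2:ℂ) - n * Complex.I) * x = -(2 * (x:ℂ)) + -((n:ℂ) * Complex.I) * x by ring,
      Complex.exp_add, Complex.exp_add]
    ring
  rw [intervalIntegral.integral_congr h1]
  have hi1 : (∫ x in (-Real.pi)..Real.pi, Complex.exp (((2:ℂ) - n * Complex.I) * x))
      = (Complex.exp (((2:ℂ) - n * Complex.I) * Real.pi)
        - Complex.exp (((2:ℂ) - n * Complex.I) * (-Real.pi))) / ((2:ℂ) - n * Complex.I) := by
    have := integral_exp_mul_complex (a := -Real.pi) (b := Real.pi) (two_sub_ne n)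
    rw [this]
    norm_num
  have hi2 : (∫ x in (-Real.pi)..Real.pi, Complex.exp (((-2:ℂ) - n * Complex.I) * x))
      = (Complex.exp (((-2:ℂ) - n * Complex.I) * Real.pi)
        - Complex.exp (((-2:ℂ) - n * Complex.I) * (-Real.pi))) / ((-2:ℂ) - n * Complex.I) := by
    have := integral_exp_mul_complex (a := -Real.pi) (b := Real.pi) (neg_two_sub_ne n)
    rw [this]
    norm_num
  have hcont1 : Continuous fun x : ℝ => Complex.exp (((2:ℂ) - n * Complex.I) * x) := by
    fun_prop
  have hcont2 : Continuous fun x : ℝ => Complex.exp (((-2:ℂ) - n * Complex.I) * x) := by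
    fun_prop
  rw [intervalIntegral.integral_div, intervalIntegral.integral_add
    (hcont1.intervalIntegrable _ _) (hcont2.intervalIntegrable _ _), hi1, hi2]
  have e1 : ((2:ℂ) - n * Complex.I) * Real.pi = 2 * (Real.pi:ℂ) + -((n:ℂ) * Real.pi * Complex.I) := by ring
  have e2 : ((2:ℂ) - n * Complex.I) * (-Real.pi) = -(2 * (Real.pi:ℂ)) + ((n:ℂ) * Real.pi * Complex.I) := by ring
  have e3 : ((-2:ℂ) - n * Complex.I) * Real.pi = -(2 * (Real.pi:ℂ)) + -((n:ℂ) * Real.pi * Complex.I) := by ring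
  have e4 : ((-2:ℂ) - n * Complex.I) * (-Real.pi) = 2 * (Real.pi:ℂ) + ((n:ℂ) * Real.pi * Complex.I) := by ring
  rw [e1, e2, e3, e4, Complex.exp_add, Complex.exp_add, Complex.exp_add, Complex.exp_add,
    exp_int_pi_I, exp_neg_int_pi_I]
  have hsinh : ((Real.sinh (2*Real.pi) : ℝ) : ℂ)
      = (Complex.exp (2 * (Real.pi:ℂ)) - Complex.exp (-(2 * (Real.pi:ℂ)))) / 2 := by
    rw [Complex.ofReal_sinh, eq_div_iff (two_ne_zero' ℂ), mul_comm, Complex.two_sinh]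
    push_cast
    ring_nf
  have hfactor : (4:ℂ) + (n:ℂ)^2 = ((2:ℂ) - n * Complex.I) * (-((-2:ℂ) - n * Complex.I)) := by
    have hI := Complex.I_sq
    ring_nf
    rw [hI]
    ring
  rw [Complex.real_smul]
  push_cast
  rw [show Complex.sinh (2*(Real.pi:ℂ))
      = (Complex.exp (2*(Real.pi:ℂ)) - Complex.exp (-(2*(Real.pi:ℂ))))/2 from by
    rw [eq_div_iff (two_ne_zero' ℂ), mul_comm, Complex.two_sinh]]
  set A := Complex.exp (2*(Real.pi:ℂ))
  set B := Complex.exp (-(2*(Real.pi:ℂ)))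
  set e := (-1:ℂ)^n
  have hcomb : (A * e - B * e) / ((2:ℂ) - n * Complex.I)
      + (B * e - A * e) / ((-2:ℂ) - n * Complex.I)
      = e * (A - B) * 4 / (4 + (n:ℂ)^2) := by
    rw [hfactor, div_add_div _ _ (two_sub_ne n) (neg_two_sub_ne n),
      div_eq_div_iff (mul_ne_zero (two_sub_ne n) (neg_two_sub_ne n))
        (mul_ne_zero (two_sub_ne n) (neg_ne_zero.mpr (neg_two_sub_ne n)))]
    ring
  rw [hcomb]
  field_simp [four_add_sq_ne n]
  ring

lemma summable_nat_aux : Summable (fun n : ℕ => 1 / (4 + (n : ℝ) ^ 2)) := by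
  have base : Summable (fun n : ℕ => 1 / (n : ℝ) ^ 2) :=
    summable_one_div_nat_pow.mpr one_lt_two
  refine Summable.of_norm_bounded_eventually base ?_
  filter_upwards [Set.Finite.eventually_cofinite_notMem (Set.finite_singleton 0)] with n hn
  have hn1 : (1:ℝ) ≤ (n:ℝ) := by
    exact_mod_cast Nat.one_le_iff_ne_zero.mpr (by simpa using hn)
  rw [Real.norm_eq_abs, abs_of_pos (by positivity)]
  apply one_div_le_one_div_of_le (by positivity)
  nlinarith

lemma summable_int_aux : Summable (fun n : ℤ => 1 / (4 + (n : ℝ) ^ 2)) := by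
  refine Summable.of_nat_of_neg (summable_nat_aux.congr fun n => ?_)
    (summable_nat_aux.congr fun n => ?_) <;> push_cast <;> ring

theorem key_int_sum :
    HasSum (fun n : ℤ => 1 / (4 + (n : ℝ) ^ 2))
      (Real.cosh (2 * Real.pi) / (2 * Real.sinh (2 * Real.pi) / Real.pi)) := by
  haveI : Fact (0 < 2 * Real.pi) := ⟨by positivity⟩
  set K : ℝ := 2 * Real.sinh (2 * Real.pi) / Real.pi with hKdef
  have hKpos : 0 < K := by
    have := Real.sinh_pos_iff.mpr (by positivity : (0:ℝ) < 2 * Real.pi)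
    positivity
  have hKC : (K:ℂ) ≠ 0 := Complex.ofReal_ne_zero.mpr hKpos.ne'
  -- summability of Fourier coefficients
  have hsum : Summable (fourierCoeff (⇑Fc)) := by
    refine Summable.of_norm (((summable_int_aux.mul_left K).congr fun n => ?_))
    rw [fourierCoeff_Fc n]
    have hcast : ((4:ℂ) + (n:ℂ)^2) = (((4 + (n:ℝ)^2 : ℝ)) : ℂ) := by push_cast; ring
    rw [norm_div, norm_mul, hcast, Complex.norm_real, Complex.norm_real,
      norm_zpow, norm_neg, norm_one, one_zpow, one_mul,
      Real.norm_eq_abs, Real.norm_eq_abs, abs_of_pos hKpos,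
      abs_of_pos (by positivity : (0:ℝ) < 4 + (n:ℝ)^2)]
    rw [mul_one_div]
  -- pointwise sum at π
  have hpt := has_pointwise_sum_fourier_series_of_summable hsum
    ((Real.pi : ℝ) : AddCircle (2 * Real.pi))
  have hfour : ∀ i : ℤ, (fourier i ((Real.pi : ℝ) : AddCircle (2*Real.pi)) : ℂ) = (-1:ℂ)^i := by
    intro i
    rw [fourier_coe_apply, ← exp_int_pi_I i]
    congr 1
    have : ((2:ℂ) * Real.pi) ≠ 0 := by
      simpa using Complex.ofReal_ne_zero.mpr Real.pi_ne_zero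
    push_cast
    field_simp
  have hFpi : Fc ((Real.pi : ℝ) : AddCircle (2*Real.pi)) = (Real.cosh (2*Real.pi) : ℂ) := by
    rw [Fc_coe Real.pi (by rw [abs_of_pos Real.pi_pos])]
    rw [Complex.ofReal_cosh]
    norm_num
  rw [hFpi] at hpt
  have hterm : (fun i : ℤ => fourierCoeff (⇑Fc) i • (fourier i ((Real.pi : ℝ) : AddCircle (2*Real.pi)) : ℂ))
      = fun i : ℤ => ((1 / (4 + (i:ℝ)^2) * K : ℝ) : ℂ) := by
    funext i
    rw [smul_eq_mul, fourierCoeff_Fc i, hfour i, hKdef]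
    push_cast
    linear_combination (2 * Complex.sinh (2*(Real.pi:ℂ)) / (Real.pi:ℂ) / (4 + (i:ℂ)^2))
      * (neg_one_zpow_mul_self i)
  rw [hterm] at hpt
  have hpt2 : HasSum (fun i : ℤ => 1 / (4 + (i:ℝ)^2) * K) (Real.cosh (2*Real.pi)) :=
    Complex.hasSum_ofReal.mp (by exact_mod_cast hpt)
  have h3 := hpt2.div_const K
  have heq : (fun i : ℤ => 1 / (4 + (i:ℝ)^2) * K / K) = fun i : ℤ => 1 / (4 + (i:ℝ)^2) :=
    funext fun i => mul_div_cancel_right₀ _ hKpos.ne'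
  rw [heq] at h3
  exact h3


end aux

/-- The series `∑_{n=0}^∞ 1/(4 + n²)` converges and its sum equals
`(1/8)·(2π·coth(2π) + 1)`. -/
theorem sum_one_div_four_add_sq :
    Summable (fun n : ℕ => 1 / (4 + (n : ℝ) ^ 2))
      ∧ ∑' n : ℕ, 1 / (4 + (n : ℝ) ^ 2) = (1/8) * (2 * π * cothR (2 * π) + 1) := by
  have hZ := key_int_sum
  have h1 := hZ.nat_add_neg
  simp only [Int.cast_neg, Int.cast_natCast, neg_sq, Int.cast_zero] at h1
  have h2 := h1.div_const 2
  have heq2 : (fun n : ℕ => (1 / (4 + (n:ℝ)^2) + 1 / (4 + (n:ℝ)^2)) / 2)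
      = fun n : ℕ => 1 / (4 + (n:ℝ)^2) := by
    funext n; ring
  rw [heq2] at h2
  have hval : (Real.cosh (2*Real.pi) / (2 * Real.sinh (2*Real.pi) / Real.pi)
      + 1 / (4 + (0:ℝ)^2)) / 2 = (1/8) * (2 * Real.pi * cothR (2 * Real.pi) + 1) := by
    have hs : Real.sinh (2*Real.pi) ≠ 0 :=
      (Real.sinh_pos_iff.mpr (by positivity)).ne'
    rw [cothR]
    field_simp
    ring
  rw [hval] at h2
  exact ⟨h2.summable, h2.tsum_eq⟩
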